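/- For any k ∈ Z and homogeneous x ∈ Â[k]_α, y ∈ Â[k+1]_β, the q-commutator [x,y]_q = xy − q^{−(α,β)} yx lies in the sum Σ Â[k+1]_{β'} Â[k]_{α'} over pairs (α',β') with ‖α'‖ < ‖α‖ and ‖β'‖ < ‖β‖, where for γ = Σ_i a_i α_i one sets ‖γ‖ = Σ_i |a_i| α_i, and γ' < γ means γ − γ' is a nonzero sum of simple roots with nonnegative coefficients. -/

import Mathlib

/- Common setting: a symmetrizable generalized Cartan matrix, the field
`𝕂 = ℚ(q^{1/2})` (with `sqv = q^{1/2}` and `q = qh = sqv²`), quantum integers, the bosonic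
extension `hA A` presented by the `q`-Serre relations and the bosonic commutation
relations, its weight spaces and distinguished subalgebras, and the root-lattice
pairing. -/

set_option maxHeartbeats 1000000
set_option synthInstance.maxHeartbeats 400000

noncomputable section

structure GCM (I : Type) where
  c : I → I → ℤ
  d : I → ℤ
  d_pos : ∀ i, 0 < d i
  diag : ∀ i, c i i = 2
  offdiag : ∀ i j, i ≠ j → c i j ≤ 0
  dsymm : ∀ i j, d i * c i j = d j * c j i

abbrev 𝕂 : Type := RatFunc ℚ

/-- The square root `q^{1/2}` of `q`. -/
def sqv : 𝕂 := RatFunc.X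

/-- The indeterminate `q = (q^{1/2})²`. -/
def qh : 𝕂 := sqv ^ 2

def qNum (t : 𝕂) (n : ℕ) : 𝕂 := (t ^ n - t⁻¹ ^ n) / (t - t⁻¹)

def qFact (t : 𝕂) (n : ℕ) : 𝕂 := ∏ k ∈ Finset.range n, qNum t (k + 1)

def qBinom (t : 𝕂) (m k : ℕ) : 𝕂 := qFact t m / (qFact t k * qFact t (m - k))

variable {I : Type} [DecidableEq I]

/-- `q_i = q^{d_i}`. -/
def qd (A : GCM I) (i : I) : 𝕂 := qh ^ A.d i

/-- `ζ_i = 1 - q_i²`. -/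
def zi (A : GCM I) (i : I) : 𝕂 := 1 - qd A i ^ 2

/-- The `q`-Serre element `Σ_{k=0}^{b_{ij}} (-1)^k [b_{ij} choose k]_{q_i} a^k b a^{b_{ij}-k}`
for elements `a, b` of any `𝕂`-algebra, where `b_{ij} = 1 - c_{ij}`. -/
def serreIn {R : Type} [Ring R] [Algebra 𝕂 R] (A : GCM I) (i j : I) (a b : R) : R :=
  ∑ k ∈ Finset.range ((1 - A.c i j).toNat + 1),
    ((-1 : 𝕂) ^ k * qBinom (qd A i) ((1 - A.c i j).toNat) k) •
      (a ^ k * b * a ^ ((1 - A.c i j).toNat - k))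

/-- The defining relations of the bosonic extension: (a) for each `p`, the `q`-Serre
relations among the `f_{i,p}`; (b) for `m < p`,
`f_{i,m} f_{j,p} = q^{(-1)^{p-m+1}(α_i,α_j)} f_{j,p} f_{i,m} + δ_{(j,p),(i,m+1)}(1-q_i²)`. -/
inductive hARel (A : GCM I) : FreeAlgebra 𝕂 (I × ℤ) → FreeAlgebra 𝕂 (I × ℤ) → Prop
  | serre (i j : I) (p : ℤ) (h : i ≠ j) :
      hARel A (serreIn A i j (FreeAlgebra.ι 𝕂 (i, p)) (FreeAlgebra.ι 𝕂 (j, p))) 0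
  | comm (i j : I) (m p : ℤ) (h : m < p) :
      hARel A (FreeAlgebra.ι 𝕂 (i, m) * FreeAlgebra.ι 𝕂 (j, p))
        (qh ^ (((p - m + 1).negOnePow : ℤ) * (A.d i * A.c i j)) •
            (FreeAlgebra.ι 𝕂 (j, p) * FreeAlgebra.ι 𝕂 (i, m))
          + if j = i ∧ p = m + 1 then ((1 : 𝕂) - qd A i ^ 2) • 1 else 0)

/-- The bosonic extension `Â` associated with the generalized Cartan matrix. -/
abbrev hA (A : GCM I) : Type := RingQuot (hARel A)

/-- The generator `f_{i,p}` of the bosonic extension. -/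
def ff (A : GCM I) (i : I) (p : ℤ) : hA A :=
  RingQuot.mkAlgHom 𝕂 (hARel A) (FreeAlgebra.ι 𝕂 (i, p))

/-- The symmetric bilinear pairing on the root lattice, `(α_i, α_j) = d_i c_{ij}`. -/
def ip (A : GCM I) (β γ : I →₀ ℤ) : ℤ :=
  β.sum fun i a => γ.sum fun j b => a * b * (A.d i * A.c i j)

/-- `α_{i,m} = (-1)^m α_i` as an element of the root lattice. -/
def aim (i : I) (m : ℤ) : I →₀ ℤ := Finsupp.single i ((m.negOnePow : ℤ))

/-- The weight space of weight `β` of `Â`, where `wt (f_{i,p}) = (-1)^{p+1} α_i`. -/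
def hAwt (A : GCM I) (β : I →₀ ℤ) : Submodule 𝕂 (hA A) :=
  Submodule.span 𝕂 {x | ∃ l : List (I × ℤ),
    (l.map fun p => Finsupp.single p.1 (((p.2 + 1).negOnePow : ℤ))).sum = β ∧
    x = (l.map fun p => ff A p.1 p.2).prod}

/-- The subalgebra `Â[a,b]` generated by `{f_{i,k} | a ≤ k ≤ b}`. -/
def hAband (A : GCM I) (a b : ℤ) : Subalgebra 𝕂 (hA A) :=
  Algebra.adjoin 𝕂 {x | ∃ i k, a ≤ k ∧ k ≤ b ∧ x = ff A i k}

/-- The subalgebra `Â[m]`. -/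
def hAk (A : GCM I) (m : ℤ) : Subalgebra 𝕂 (hA A) := hAband A m m

/-- The subalgebra `Â_{≥ m}`. -/
def hAge (A : GCM I) (m : ℤ) : Subalgebra 𝕂 (hA A) :=
  Algebra.adjoin 𝕂 {x | ∃ i k, m ≤ k ∧ x = ff A i k}

/-- The subalgebra `Â_{≤ m}`. -/
def hAle (A : GCM I) (m : ℤ) : Subalgebra 𝕂 (hA A) :=
  Algebra.adjoin 𝕂 {x | ∃ i k, k ≤ m ∧ x = ff A i k}

/-- The subalgebra `Â_{> m}`. -/
def hAgt (A : GCM I) (m : ℤ) : Subalgebra 𝕂 (hA A) := hAge A (m + 1)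

/-- The subalgebra `Â_{< m}`. -/
def hAlt (A : GCM I) (m : ℤ) : Subalgebra 𝕂 (hA A) := hAle A (m - 1)

/-- `‖γ‖ = Σ_i |a_i| α_i` for `γ = Σ_i a_i α_i`. -/
def nrm (γ : I →₀ ℤ) : I →₀ ℤ := γ.mapRange (fun n => |n|) (by simp)

/-- `γ' < γ`: `γ - γ'` is a nonzero sum of simple roots with nonnegative coefficients. -/
def qlt (γ' γ : I →₀ ℤ) : Prop := γ' ≠ γ ∧ ∀ i, γ' i ≤ γ i


/-! ### Auxiliary development -/
set_option linter.unusedSectionVars false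

lemma qh_ne_zero : qh ≠ 0 := pow_ne_zero _ RatFunc.X_ne_zero

/-- weight of generator `f_{i,p}` -/
def wtp (p : I × ℤ) : I →₀ ℤ := Finsupp.single p.1 (((p.2 + 1).negOnePow : ℤ))

/-- content of a list of indices -/
def cnt (l : List I) : I →₀ ℤ := (l.map fun i => Finsupp.single i 1).sum

/-- level-`k` monomial -/
def lvlMon (A : GCM I) (k : ℤ) (l : List I) : hA A := (l.map fun i => ff A i k).prod

/-- weight of a level-`k` monomial -/
def lw (k : ℤ) (l : List I) : I →₀ ℤ := (l.map fun i => wtp (i, k)).sum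

lemma cnt_cons (i : I) (l : List I) : cnt (i :: l) = Finsupp.single i 1 + cnt l := by
  simp [cnt]

lemma lw_cons (k : ℤ) (i : I) (l : List I) : lw k (i :: l) = wtp (i, k) + lw k l := by
  simp [lw]

lemma lvlMon_cons (A : GCM I) (k : ℤ) (i : I) (l : List I) :
    lvlMon A k (i :: l) = ff A i k * lvlMon A k l := by
  simp [lvlMon]

lemma cnt_nonneg (l : List I) (i : I) : 0 ≤ cnt l i := by
  induction l with
  | nil => simp [cnt]
  | cons j l ih =>
      rw [cnt_cons]
      have : (0:ℤ) ≤ Finsupp.single j 1 i := by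
        rcases eq_or_ne j i with h | h <;> simp [Finsupp.single_apply, h]
      simpa using add_nonneg this ih

lemma abs_negOnePow (n : ℤ) : |((n.negOnePow : ℤ))| = 1 := by
  rcases Int.even_or_odd n with h | h
  · rw [Int.negOnePow_even _ h]; simp
  · rw [Int.negOnePow_odd _ h]; simp

lemma nrm_apply (γ : I →₀ ℤ) (i : I) : nrm γ i = |γ i| := rfl

lemma lw_eq (k : ℤ) (l : List I) : lw k l = (((k+1).negOnePow : ℤ)) • cnt l := by
  induction l with
  | nil => simp [lw, cnt]
  | cons j l ih =>
      rw [lw_cons, cnt_cons, smul_add, ih, wtp]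
      congr 1
      rw [Finsupp.smul_single]
      norm_num

lemma nrm_lw (k : ℤ) (l : List I) : nrm (lw k l) = cnt l := by
  ext i
  rw [nrm_apply, lw_eq, Finsupp.smul_apply, smul_eq_mul, abs_mul, abs_negOnePow, one_mul,
    abs_of_nonneg (cnt_nonneg l i)]

/-! ### pairing lemmas -/

lemma ip_zero_left (A : GCM I) (γ : I →₀ ℤ) : ip A 0 γ = 0 := by
  simp [ip]

lemma ip_zero_right (A : GCM I) (γ : I →₀ ℤ) : ip A γ 0 = 0 := by
  simp [ip]

lemma ip_add_left (A : GCM I) (β₁ β₂ γ : I →₀ ℤ) :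
    ip A (β₁ + β₂) γ = ip A β₁ γ + ip A β₂ γ := by
  unfold ip
  rw [Finsupp.sum_add_index]
  · intro i _; simp
  · intro i _ a₁ a₂
    rw [← Finsupp.sum_add]
    congr 1; ext j b; ring

lemma ip_add_right (A : GCM I) (β γ₁ γ₂ : I →₀ ℤ) :
    ip A β (γ₁ + γ₂) = ip A β γ₁ + ip A β γ₂ := by
  unfold ip
  rw [← Finsupp.sum_add]
  congr 1; ext i a
  rw [Finsupp.sum_add_index]
  · intro j _; simp
  · intro j _ b₁ b₂; ring

lemma ip_single_single (A : GCM I) (i j : I) (a b : ℤ) :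
    ip A (Finsupp.single i a) (Finsupp.single j b) = a * b * (A.d i * A.c i j) := by
  unfold ip
  rw [Finsupp.sum_single_index, Finsupp.sum_single_index]
  · simp
  · rw [Finsupp.sum_single_index] <;> simp

lemma ip_wtp (A : GCM I) (i j : I) (k : ℤ) :
    ip A (wtp (i, k)) (wtp (j, k + 1)) = -(A.d i * A.c i j) := by
  unfold wtp
  rw [ip_single_single]
  have h : ((k+1).negOnePow : ℤ) * ((k+1+1).negOnePow : ℤ) = -1 := by
    rw [← Units.val_mul, ← Int.negOnePow_add]
    have : k + 1 + (k + 1 + 1) = 2 * (k + 1) + 1 := by ring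
    rw [this, Int.negOnePow_odd _ ⟨k + 1, by ring⟩]
    simp
  rw [show (((k+1).negOnePow:ℤ)) * (((k+1+1).negOnePow:ℤ)) * (A.d i * A.c i j)
      = (((k+1).negOnePow:ℤ) * ((k+1+1).negOnePow:ℤ)) * (A.d i * A.c i j) by ring, h]
  ring

/-! ### qlt lemmas -/

lemma qlt_iff (x y : I →₀ ℤ) : qlt x y ↔ (∀ i, x i ≤ y i) ∧ ∃ i, x i < y i := by
  constructor
  · rintro ⟨hne, hle⟩
    refine ⟨hle, ?_⟩
    by_contra h
    push_neg at h
    exact hne (Finsupp.ext fun i => le_antisymm (hle i) (h i))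
  · rintro ⟨hle, i, hi⟩
    exact ⟨fun he => absurd (he ▸ hi) (lt_irrefl _), hle⟩

lemma qlt_trans_le {x y z : I →₀ ℤ} (h : qlt x y) (h2 : ∀ i, y i ≤ z i) : qlt x z := by
  rw [qlt_iff] at h ⊢
  exact ⟨fun i => (h.1 i).trans (h2 i), h.2.imp fun i hi => lt_of_lt_of_le hi (h2 i)⟩

lemma qlt_cnt_cons {m : I →₀ ℤ} (j : I) (l : List I) (h : qlt m (cnt l)) :
    qlt m (cnt (j :: l)) := by
  refine qlt_trans_le h fun i => ?_
  rw [cnt_cons, Finsupp.add_apply]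
  have : (0:ℤ) ≤ Finsupp.single j 1 i := by
    rcases eq_or_ne j i with h | h <;> simp [Finsupp.single_apply, h]
  omega

lemma qlt_cnt_tail (i : I) (l : List I) : qlt (cnt l) (cnt (i :: l)) := by
  rw [qlt_iff]
  constructor
  · intro j
    rw [cnt_cons, Finsupp.add_apply]
    have : (0:ℤ) ≤ Finsupp.single i 1 j := by
      rcases eq_or_ne i j with h | h <;> simp [Finsupp.single_apply, h]
    omega
  · exact ⟨i, by rw [cnt_cons, Finsupp.add_apply]; simp⟩

lemma qlt_zero_cnt_cons (j : I) (l : List I) : qlt (nrm 0) (cnt (j :: l)) := by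
  rw [qlt_iff]
  have h0 : (nrm (0 : I →₀ ℤ)) = 0 := by ext i; simp [nrm_apply]
  rw [h0]
  constructor
  · intro i; exact (cnt_nonneg _ i).trans_eq' (by simp)
  · exact ⟨j, by rw [cnt_cons, Finsupp.add_apply]; simp; exact lt_of_lt_of_le one_pos (by have := cnt_nonneg l j; omega)⟩

lemma qlt_add_single {γ m : I →₀ ℤ} (j : I) (e : ℤ) (he : |e| = 1)
    (h : qlt (nrm γ) m) : qlt (nrm (Finsupp.single j e + γ)) (Finsupp.single j 1 + m) := by
  rw [qlt_iff] at h ⊢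
  obtain ⟨hle, i0, hi0⟩ := h
  have key : ∀ i, (nrm (Finsupp.single j e + γ)) i ≤ (Finsupp.single j 1) i + (nrm γ) i := by
    intro i
    rw [nrm_apply, Finsupp.add_apply, nrm_apply]
    refine (abs_add_le _ _).trans ?_
    have : |Finsupp.single j e i| = Finsupp.single j 1 i := by
      rcases eq_or_ne j i with h | h <;> simp [Finsupp.single_apply, h, he]
    omega
  constructor
  · intro i
    rw [Finsupp.add_apply]
    exact (key i).trans (by have := hle i; omega)
  · refine ⟨i0, lt_of_le_of_lt (key i0) ?_⟩
    rw [Finsupp.add_apply]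
    omega

/-! ### relations in `hA` -/

lemma map_serreIn_mk (A : GCM I) (i j : I) (a b : FreeAlgebra 𝕂 (I × ℤ)) :
    RingQuot.mkAlgHom 𝕂 (hARel A) (serreIn A i j a b)
      = serreIn A i j (RingQuot.mkAlgHom 𝕂 (hARel A) a) (RingQuot.mkAlgHom 𝕂 (hARel A) b) := by
  simp [serreIn, map_sum, map_smul, map_mul, map_pow]

lemma serre_hA (A : GCM I) (i j : I) (p : ℤ) (h : i ≠ j) :
    serreIn A i j (ff A i p) (ff A j p) = 0 := by
  have h1 := RingQuot.mkAlgHom_rel 𝕂 (hARel.serre (A := A) i j p h)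
  rw [map_serreIn_mk] at h1
  simpa [ff] using h1

lemma comm_hA (A : GCM I) (i j : I) (m p : ℤ) (h : m < p) :
    ff A i m * ff A j p
      = qh ^ (((p - m + 1).negOnePow : ℤ) * (A.d i * A.c i j)) • (ff A j p * ff A i m)
        + (if j = i ∧ p = m + 1 then ((1 : 𝕂) - qd A i ^ 2) • 1 else 0) := by
  have h1 := RingQuot.mkAlgHom_rel 𝕂 (hARel.comm (A := A) i j m p h)
  rw [map_mul, map_add, map_smul, map_mul, apply_ite (RingQuot.mkAlgHom 𝕂 (hARel A)),
    map_smul, map_one, map_zero] at h1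
  exact h1

/-! ### the grading morphism -/

abbrev GG (I : Type) : Type := Multiplicative (I →₀ ℤ)

abbrev MA (A : GCM I) : Type := MonoidAlgebra (hA A) (GG I)

lemma single_finset_sum (A : GCM I) (g : GG I) (s : Finset ℕ)
    (f : ℕ → hA A) :
    (MonoidAlgebra.single g (∑ k ∈ s, f k) : MA A) = ∑ k ∈ s, MonoidAlgebra.single g (f k) :=
  map_sum (MonoidAlgebra.singleAddHom g) f s

lemma serreIn_single (A : GCM I) (i j : I) (g h : GG I) (a b : hA A) :
    serreIn A i j (MonoidAlgebra.single g a) (MonoidAlgebra.single h b)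
      = MonoidAlgebra.single (g ^ (1 - A.c i j).toNat * h) (serreIn A i j a b) := by
  unfold serreIn
  set n := (1 - A.c i j).toNat with hn
  rw [single_finset_sum A]
  refine Finset.sum_congr rfl fun k hk => ?_
  have hkn : k ≤ n := by
    have := Finset.mem_range.mp hk; omega
  rw [MonoidAlgebra.single_pow, MonoidAlgebra.single_pow, MonoidAlgebra.single_mul_single,
    MonoidAlgebra.single_mul_single]
  have hg : g ^ k * h * g ^ (n - k) = g ^ n * h := by
    rw [mul_comm (g ^ k) h, mul_assoc, ← pow_add]
    rw [Nat.add_sub_cancel' hkn, mul_comm h]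
  rw [hg]
  exact MonoidAlgebra.smul_single _ _ _

/-- The free-algebra lift towards the monoid algebra. -/
def PhiFree (A : GCM I) : FreeAlgebra 𝕂 (I × ℤ) →ₐ[𝕂] MA A :=
  FreeAlgebra.lift 𝕂 fun p => MonoidAlgebra.single (Multiplicative.ofAdd (wtp p)) (ff A p.1 p.2)

lemma PhiFree_ι (A : GCM I) (p : I × ℤ) :
    PhiFree A (FreeAlgebra.ι 𝕂 p)
      = MonoidAlgebra.single (Multiplicative.ofAdd (wtp p)) (ff A p.1 p.2) := by
  simp [PhiFree]

lemma wtp_sum_zero (i : I) (m : ℤ) : wtp (i, m) + wtp (i, m + 1) = 0 := by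
  unfold wtp
  rw [← Finsupp.single_add]
  have : ((m + 1 + 1).negOnePow : ℤ) = -((m + 1).negOnePow : ℤ) := by
    rw [Int.negOnePow_succ]; simp
  rw [this]
  simp

lemma PhiFree_rel (A : GCM I) : ∀ ⦃x y : FreeAlgebra 𝕂 (I × ℤ)⦄,
    hARel A x y → PhiFree A x = PhiFree A y := by
  intro x y r
  cases r with
  | serre i j p h =>
      rw [map_zero]
      have hm : PhiFree A (serreIn A i j (FreeAlgebra.ι 𝕂 (i, p)) (FreeAlgebra.ι 𝕂 (j, p)))
          = serreIn A i j (PhiFree A (FreeAlgebra.ι 𝕂 (i, p))) (PhiFree A (FreeAlgebra.ι 𝕂 (j, p))) := by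
        simp [serreIn, map_sum, map_smul, map_mul, map_pow]
      rw [hm, PhiFree_ι, PhiFree_ι]
      rw [serreIn_single, serre_hA A i j p h]
      simp
  | comm i j m p h =>
      rw [map_mul, map_add, map_smul, map_mul, apply_ite (PhiFree A), map_smul, map_one,
        map_zero, PhiFree_ι, PhiFree_ι,
        MonoidAlgebra.single_mul_single, MonoidAlgebra.single_mul_single]
      have hG : Multiplicative.ofAdd (wtp (j, p)) * Multiplicative.ofAdd (wtp (i, m))
          = Multiplicative.ofAdd (wtp (i, m)) * Multiplicative.ofAdd (wtp (j, p)) :=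
        mul_comm _ _
      rw [hG]
      set G := Multiplicative.ofAdd (wtp (i, m)) * Multiplicative.ofAdd (wtp (j, p)) with hGdef
      rw [MonoidAlgebra.smul_single]
      by_cases hc : j = i ∧ p = m + 1
      · obtain ⟨rfl, rfl⟩ := hc
        have hG1 : G = 1 := by
          rw [hGdef, ← ofAdd_add, wtp_sum_zero]
          rfl
        rw [if_pos ⟨rfl, rfl⟩]
        rw [hG1]
        have h1 : (1 : MA A) = MonoidAlgebra.single 1 1 := rfl
        rw [h1, MonoidAlgebra.smul_single, ← MonoidAlgebra.single_add]
        congr 1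
        have := comm_hA A j j m (m + 1) h
        rw [if_pos ⟨rfl, rfl⟩] at this
        exact this
      · rw [if_neg hc, add_zero]
        congr 1
        have := comm_hA A i j m p h
        rw [if_neg hc, add_zero] at this
        exact this

/-- The weight-grading algebra morphism. -/
def Phi (A : GCM I) : hA A →ₐ[𝕂] MA A :=
  RingQuot.liftAlgHom 𝕂 ⟨PhiFree A, PhiFree_rel A⟩

lemma Phi_ff (A : GCM I) (i : I) (p : ℤ) :
    Phi A (ff A i p) = MonoidAlgebra.single (Multiplicative.ofAdd (wtp (i, p))) (ff A i p) := by
  rw [Phi, ff, RingQuot.liftAlgHom_mkAlgHom_apply]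
  exact PhiFree_ι A (i, p)

lemma Phi_prod (A : GCM I) (l : List (I × ℤ)) :
    Phi A ((l.map fun p => ff A p.1 p.2).prod)
      = MonoidAlgebra.single (Multiplicative.ofAdd ((l.map wtp).sum))
          ((l.map fun p => ff A p.1 p.2).prod) := by
  induction l with
  | nil =>
      simp only [List.map_nil, List.prod_nil, List.sum_nil, map_one]
      rfl
  | cons p l ih =>
      simp only [List.map_cons, List.prod_cons, List.sum_cons, map_mul, ih, Phi_ff,
        MonoidAlgebra.single_mul_single, ← ofAdd_add]

/-- weight-`γ` coefficient projection -/
def proj (A : GCM I) (γ : I →₀ ℤ) (x : hA A) : hA A :=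
  (Phi A x).coeff (Multiplicative.ofAdd γ)

lemma proj_add (A : GCM I) (γ : I →₀ ℤ) (x y : hA A) :
    proj A γ (x + y) = proj A γ x + proj A γ y := by
  unfold proj; rw [map_add]; rfl

lemma proj_smul (A : GCM I) (γ : I →₀ ℤ) (c : 𝕂) (x : hA A) :
    proj A γ (c • x) = c • proj A γ x := by
  unfold proj; rw [map_smul]; rfl

lemma proj_zero (A : GCM I) (γ : I →₀ ℤ) : proj A γ 0 = 0 := by
  unfold proj; rw [map_zero]; rfl

lemma proj_prod (A : GCM I) (γ : I →₀ ℤ) (l : List (I × ℤ)) :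
    proj A γ ((l.map fun p => ff A p.1 p.2).prod)
      = if (l.map wtp).sum = γ then (l.map fun p => ff A p.1 p.2).prod else 0 := by
  unfold proj
  rw [Phi_prod]
  rw [show (MonoidAlgebra.single (Multiplicative.ofAdd ((l.map wtp).sum))
      ((l.map fun p => ff A p.1 p.2).prod)).coeff (Multiplicative.ofAdd γ)
    = Finsupp.single (Multiplicative.ofAdd ((l.map wtp).sum))
      ((l.map fun p => ff A p.1 p.2).prod) (Multiplicative.ofAdd γ) from rfl,
    Finsupp.single_apply]
  by_cases h : (l.map wtp).sum = γ
  · rw [if_pos h, if_pos (by rw [h])]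
  · rw [if_neg h, if_neg (fun he => h (by exact Multiplicative.ofAdd.injective he))]

lemma proj_of_mem_wt (A : GCM I) (γ : I →₀ ℤ) (x : hA A) (hx : x ∈ hAwt A γ) :
    proj A γ x = x := by
  unfold hAwt at hx
  induction hx using Submodule.span_induction with
  | mem z hz =>
      obtain ⟨l, hl, rfl⟩ := hz
      rw [proj_prod, if_pos]
      exact hl
  | zero => exact proj_zero A γ
  | add x y _ _ hx hy => rw [proj_add, hx, hy]
  | smul c x _ hx => rw [proj_smul, hx]

/-! ### membership lemmas -/

lemma ff_mem_hAk (A : GCM I) (i : I) (k : ℤ) : ff A i k ∈ hAk A k :=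
  Algebra.subset_adjoin ⟨i, k, le_refl k, le_refl k, rfl⟩

lemma lvlMon_mem_hAk (A : GCM I) (k : ℤ) (l : List I) : lvlMon A k l ∈ hAk A k := by
  induction l with
  | nil => exact one_mem _
  | cons i l ih => rw [lvlMon_cons]; exact mul_mem (ff_mem_hAk A i k) ih

lemma lvlMon_eq_prod (A : GCM I) (k : ℤ) (l : List I) :
    lvlMon A k l = ((l.map fun i => (i, k)).map fun p => ff A p.1 p.2).prod := by
  simp [lvlMon, List.map_map, Function.comp_def]

lemma lw_eq_sum (k : ℤ) (l : List I) :
    lw k l = ((l.map fun i => (i, k)).map wtp).sum := by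
  simp [lw, List.map_map, Function.comp_def]

lemma lvlMon_mem_hAwt (A : GCM I) (k : ℤ) (l : List I) :
    lvlMon A k l ∈ hAwt A (lw k l) := by
  refine Submodule.subset_span ⟨l.map fun i => (i, k), (lw_eq_sum k l).symm, lvlMon_eq_prod A k l⟩

lemma mul_mem_hAwt (A : GCM I) {γ₁ γ₂ : I →₀ ℤ} {x y : hA A}
    (hx : x ∈ hAwt A γ₁) (hy : y ∈ hAwt A γ₂) : x * y ∈ hAwt A (γ₁ + γ₂) := by
  unfold hAwt at *
  induction hx using Submodule.span_induction with
  | mem x hxm =>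
      induction hy using Submodule.span_induction with
      | mem y hym =>
          obtain ⟨l₁, hl₁, rfl⟩ := hxm
          obtain ⟨l₂, hl₂, rfl⟩ := hym
          refine Submodule.subset_span ⟨l₁ ++ l₂, ?_, ?_⟩
          · rw [List.map_append, List.sum_append, hl₁, hl₂]
          · rw [List.map_append, List.prod_append]
      | zero => rw [mul_zero]; exact zero_mem _
      | add y₁ y₂ _ _ h₁ h₂ => rw [mul_add]; exact add_mem h₁ h₂
      | smul c y _ h => rw [mul_smul_comm]; exact Submodule.smul_mem _ c h
  | zero => rw [zero_mul]; exact zero_mem _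
  | add x₁ x₂ _ _ h₁ h₂ => rw [add_mul]; exact add_mem h₁ h₂
  | smul c x _ h => rw [smul_mul_assoc]; exact Submodule.smul_mem _ c h

lemma one_mem_hAwt (A : GCM I) : (1 : hA A) ∈ hAwt A 0 :=
  Submodule.subset_span ⟨[], by simp, by simp⟩

/-- span of level-`k` monomials of weight `γ` -/
def Mspan (A : GCM I) (k : ℤ) (γ : I →₀ ℤ) : Submodule 𝕂 (hA A) :=
  Submodule.span 𝕂 {x | ∃ l : List I, lw k l = γ ∧ x = lvlMon A k l}

lemma proj_mem_Mspan (A : GCM I) (k : ℤ) (α : I →₀ ℤ) (x : hA A)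
    (hx1 : x ∈ hAk A k) : proj A α x ∈ Mspan A k α := by
  have hx1' : x ∈ Submodule.span 𝕂
      (Submonoid.closure {x : hA A | ∃ i k', k ≤ k' ∧ k' ≤ k ∧ x = ff A i k'} : Set (hA A)) := by
    rw [← Algebra.adjoin_eq_span]
    exact hx1
  clear hx1
  induction hx1' using Submodule.span_induction with
  | mem m hm =>
      have hl : ∃ l : List I, m = lvlMon A k l := by
        induction hm using Submonoid.closure_induction with
        | mem z hz =>
            obtain ⟨i, k', h1, h2, rfl⟩ := hz
            exact ⟨[i], by simp [lvlMon, le_antisymm h2 h1]⟩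
        | one => exact ⟨[], by simp [lvlMon]⟩
        | mul a b _ _ ha hb =>
            obtain ⟨l₁, rfl⟩ := ha
            obtain ⟨l₂, rfl⟩ := hb
            exact ⟨l₁ ++ l₂, by simp [lvlMon]⟩
      obtain ⟨l, rfl⟩ := hl
      rw [lvlMon_eq_prod, proj_prod, ← lw_eq_sum, ← lvlMon_eq_prod]
      by_cases h : lw k l = α
      · rw [if_pos h]
        exact Submodule.subset_span ⟨l, h, rfl⟩
      · rw [if_neg h]; exact zero_mem _
  | zero => rw [proj_zero]; exact zero_mem _
  | add a b _ _ ha hb => rw [proj_add]; exact add_mem ha hb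
  | smul c a _ ha => rw [proj_smul]; exact Submodule.smul_mem _ c ha

lemma mem_Mspan (A : GCM I) (k : ℤ) (α : I →₀ ℤ) (x : hA A)
    (hx1 : x ∈ hAk A k) (hx2 : x ∈ hAwt A α) : x ∈ Mspan A k α := by
  have key := proj_mem_Mspan A k α x hx1
  rwa [proj_of_mem_wt A α x hx2] at key

/-! ### the target spans -/

def Nspan (A : GCM I) (k : ℤ) (l : List I) : Submodule 𝕂 (hA A) :=
  Submodule.span 𝕂 {v | ∃ l' : List I, qlt (cnt l') (cnt l) ∧ v = lvlMon A k l'}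

def Tspan (A : GCM I) (k : ℤ) (α β : I →₀ ℤ) : Submodule 𝕂 (hA A) :=
  Submodule.span 𝕂 {z : hA A | ∃ (α' β' : I →₀ ℤ) (u v : hA A),
    qlt (nrm α') (nrm α) ∧ qlt (nrm β') (nrm β) ∧
    u ∈ hAk A (k + 1) ∧ u ∈ hAwt A β' ∧ v ∈ hAk A k ∧ v ∈ hAwt A α' ∧
    z = u * v}

lemma mul_left_span {A : GCM I} {S : Set (hA A)} {P : Submodule 𝕂 (hA A)} (m : hA A)
    (h : ∀ z ∈ S, m * z ∈ P) {x : hA A} (hx : x ∈ Submodule.span 𝕂 S) : m * x ∈ P := by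
  induction hx using Submodule.span_induction with
  | mem z hz => exact h z hz
  | zero => rw [mul_zero]; exact zero_mem _
  | add a b _ _ ha hb => rw [mul_add]; exact add_mem ha hb
  | smul c a _ ha => rw [mul_smul_comm]; exact Submodule.smul_mem _ c ha

lemma mul_right_span {A : GCM I} {S : Set (hA A)} {P : Submodule 𝕂 (hA A)} (m : hA A)
    (h : ∀ z ∈ S, z * m ∈ P) {x : hA A} (hx : x ∈ Submodule.span 𝕂 S) : x * m ∈ P := by
  induction hx using Submodule.span_induction with
  | mem z hz => exact h z hz
  | zero => rw [zero_mul]; exact zero_mem _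
  | add a b _ _ ha hb => rw [add_mul]; exact add_mem ha hb
  | smul c a _ ha => rw [smul_mul_assoc]; exact Submodule.smul_mem _ c ha

lemma qlt_cons_cons {l' l : List I} (i : I) (h : qlt (cnt l') (cnt l)) :
    qlt (cnt (i :: l')) (cnt (i :: l)) := by
  rw [qlt_iff] at h ⊢
  obtain ⟨hle, i0, hi0⟩ := h
  constructor
  · intro j
    rw [cnt_cons, cnt_cons, Finsupp.add_apply, Finsupp.add_apply]
    exact add_le_add_right (hle j) _
  · refine ⟨i0, ?_⟩
    rw [cnt_cons, cnt_cons, Finsupp.add_apply, Finsupp.add_apply]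
    exact add_lt_add_right hi0 _

lemma comm_hA' (A : GCM I) (i j : I) (k : ℤ) :
    ff A i k * ff A j (k + 1)
      = qh ^ (-(ip A (wtp (i, k)) (wtp (j, k + 1)))) • (ff A j (k + 1) * ff A i k)
        + (if j = i then ((1 : 𝕂) - qd A i ^ 2) • 1 else 0) := by
  have h := comm_hA A i j k (k + 1) (by omega)
  have h2 : ((k + 1 - k + 1).negOnePow : ℤ) = 1 := by
    rw [show k + 1 - k + 1 = 2 by ring, Int.negOnePow_even 2 ⟨1, rfl⟩]
    simp
  rw [h2, one_mul] at h
  rw [ip_wtp, neg_neg]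
  convert h using 2
  simp

lemma claimA (A : GCM I) (k : ℤ) (j : I) : ∀ l : List I,
    lvlMon A k l * ff A j (k + 1)
      - qh ^ (-(ip A (lw k l) (wtp (j, k + 1)))) • (ff A j (k + 1) * lvlMon A k l)
      ∈ Nspan A k l := by
  intro l
  induction l with
  | nil =>
      have : lw k ([] : List I) = 0 := by simp [lw]
      rw [this, ip_zero_left, neg_zero, zpow_zero, one_smul]
      simp only [lvlMon, List.map_nil, List.prod_nil, one_mul, mul_one, sub_self]
      exact zero_mem _
  | cons i l ih =>
      set F := ff A j (k + 1) with hF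
      set fi := ff A i k with hfi
      set X := lvlMon A k l with hX
      set D : hA A := if j = i then ((1 : 𝕂) - qd A i ^ 2) • 1 else 0 with hD
      set e1 : ℤ := -(ip A (wtp (i, k)) (wtp (j, k + 1))) with he1
      set e2 : ℤ := -(ip A (lw k l) (wtp (j, k + 1))) with he2
      have hetot : -(ip A (lw k (i :: l)) (wtp (j, k + 1))) = e1 + e2 := by
        rw [lw_cons, ip_add_left]; ring
      have hfiF : fi * F = qh ^ e1 • (F * fi) + D := comm_hA' A i j k
      set s : hA A := X * F - qh ^ e2 • (F * X) with hs
      have key : lvlMon A k (i :: l) * F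
          - qh ^ (-(ip A (lw k (i :: l)) (wtp (j, k + 1)))) • (F * lvlMon A k (i :: l))
          = qh ^ e2 • (D * X) + fi * s := by
        rw [hetot, lvlMon_cons, ← hfi, ← hX, hs]
        rw [mul_sub, mul_smul_comm]
        have expand : fi * X * F = qh ^ (e1 + e2) • (F * (fi * X)) + qh ^ e2 • (D * X)
            + (fi * (X * F) - qh ^ e2 • (fi * (F * X))) := by
          have h1 : fi * (F * X) = qh ^ e1 • (F * (fi * X)) + D * X := by
            rw [← mul_assoc, hfiF, add_mul, smul_mul_assoc, mul_assoc]
          rw [h1]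
          rw [smul_add, smul_smul, ← zpow_add₀ qh_ne_zero]
          rw [show e2 + e1 = e1 + e2 by ring, mul_assoc]
          abel
        rw [expand]
        abel
      rw [key]
      refine add_mem (Submodule.smul_mem _ _ ?_) ?_
      · by_cases hji : j = i
        · rw [hD, if_pos hji]
          rw [smul_mul_assoc, one_mul]
          exact Submodule.smul_mem _ _
            (Submodule.subset_span ⟨l, qlt_cnt_tail i l, rfl⟩)
        · rw [hD, if_neg hji, zero_mul]
          exact zero_mem _
      · refine mul_left_span fi ?_ ih
        rintro z ⟨l', hl', rfl⟩
        rw [hfi, ← lvlMon_cons]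
        exact Submodule.subset_span ⟨i :: l', qlt_cons_cons i hl', rfl⟩

lemma Tspan_le (A : GCM I) (k : ℤ) {α₁ β₁ α₂ β₂ : I →₀ ℤ}
    (ha : ∀ i, nrm α₁ i ≤ nrm α₂ i) (hb : ∀ i, nrm β₁ i ≤ nrm β₂ i) :
    Tspan A k α₁ β₁ ≤ Tspan A k α₂ β₂ := by
  refine Submodule.span_mono ?_
  rintro z ⟨α', β', u, v, h1, h2, h3, h4, h5, h6, rfl⟩
  exact ⟨α', β', u, v, qlt_trans_le h1 ha, qlt_trans_le h2 hb, h3, h4, h5, h6, rfl⟩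

lemma ff_mem_hAwt (A : GCM I) (j : I) (k : ℤ) : ff A j k ∈ hAwt A (wtp (j, k)) := by
  have h := lvlMon_mem_hAwt A k [j]
  have h1 : lvlMon A k [j] = ff A j k := by simp [lvlMon]
  have h2 : lw k [j] = wtp (j, k) := by simp [lw]
  rwa [h1, h2] at h

lemma claimB (A : GCM I) (k : ℤ) : ∀ l2 l1 : List I,
    lvlMon A k l1 * lvlMon A (k + 1) l2
      - qh ^ (-(ip A (lw k l1) (lw (k + 1) l2))) • (lvlMon A (k + 1) l2 * lvlMon A k l1)
      ∈ Tspan A k (lw k l1) (lw (k + 1) l2) := by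
  intro l2
  induction l2 with
  | nil =>
      intro l1
      have h0 : lw (k + 1) ([] : List I) = 0 := by simp [lw]
      rw [h0, ip_zero_right, neg_zero, zpow_zero, one_smul]
      simp only [lvlMon, List.map_nil, List.prod_nil, one_mul, mul_one, sub_self]
      exact zero_mem _
  | cons j l2' ih =>
      intro l1
      set X := lvlMon A k l1 with hX
      set F := ff A j (k + 1) with hF
      set Y := lvlMon A (k + 1) l2' with hY
      set a := lw k l1 with ha
      set b' := lw (k + 1) l2' with hb'
      set e1 : ℤ := -(ip A a (wtp (j, k + 1))) with he1
      set e2 : ℤ := -(ip A a b') with he2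
      have hetot : -(ip A a (lw (k + 1) (j :: l2'))) = e1 + e2 := by
        rw [lw_cons, ip_add_right]; ring
      set t : hA A := X * F - qh ^ e1 • (F * X) with hts
      have ht : t ∈ Nspan A k l1 := claimA A k j l1
      set s : hA A := X * Y - qh ^ e2 • (Y * X) with hss
      have hs : s ∈ Tspan A k a b' := ih l1
      have h1 : X * F = qh ^ e1 • (F * X) + t := by rw [hts]; abel
      have h2 : X * Y = qh ^ e2 • (Y * X) + s := by rw [hss]; abel
      have key : lvlMon A k l1 * lvlMon A (k + 1) (j :: l2')
          - qh ^ (-(ip A (lw k l1) (lw (k + 1) (j :: l2')))) •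
              (lvlMon A (k + 1) (j :: l2') * lvlMon A k l1)
          = qh ^ e1 • (F * s) + t * Y := by
        rw [lvlMon_cons, hetot]
        rw [← mul_assoc X F Y, h1, add_mul, smul_mul_assoc, mul_assoc F X Y, h2,
          mul_add, mul_smul_comm, smul_add, smul_smul, ← zpow_add₀ qh_ne_zero,
          show e1 + e2 = e1 + e2 by ring, ← mul_assoc F Y X]
        abel
      rw [key]
      have hcnt : nrm (lw (k + 1) (j :: l2')) = cnt (j :: l2') := nrm_lw _ _
      refine add_mem (Submodule.smul_mem _ _ ?_) ?_
      · -- F * s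
        refine mul_left_span F ?_ hs
        rintro z ⟨α', β', u, v, hq1, hq2, hu1, hu2, hv1, hv2, rfl⟩
        rw [← mul_assoc]
        refine Submodule.subset_span
          ⟨α', wtp (j, k + 1) + β', F * u, v, ?_, ?_, ?_, ?_, hv1, hv2, rfl⟩
        · exact hq1
        · rw [hcnt, cnt_cons]
          have hq2' : qlt (nrm β') (cnt l2') := by rwa [nrm_lw] at hq2
          exact qlt_add_single j _ (abs_negOnePow _) hq2'
        · exact mul_mem (ff_mem_hAk A j (k + 1)) hu1
        · exact mul_mem_hAwt A (ff_mem_hAwt A j (k + 1)) hu2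
      · -- t * Y
        refine mul_right_span Y ?_ ht
        rintro z ⟨l'', hl'', rfl⟩
        have hcomm := ih l''
        set e'' : ℤ := -(ip A (lw k l'') b') with he''
        have h3 : lvlMon A k l'' * Y
            = qh ^ e'' • (Y * lvlMon A k l'')
              + (lvlMon A k l'' * Y - qh ^ e'' • (Y * lvlMon A k l'')) := by abel
        rw [h3]
        refine add_mem (Submodule.smul_mem _ _ ?_) ?_
        · refine Submodule.subset_span
            ⟨lw k l'', b', Y, lvlMon A k l'', ?_, ?_, lvlMon_mem_hAk A (k + 1) l2',
              lvlMon_mem_hAwt A (k + 1) l2', lvlMon_mem_hAk A k l'',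
              lvlMon_mem_hAwt A k l'', rfl⟩
          · rw [nrm_lw, nrm_lw]; exact hl''
          · rw [nrm_lw, hcnt]; exact qlt_cnt_tail j l2'
        · refine Tspan_le A k ?_ ?_ hcomm
          · intro i
            rw [nrm_lw, nrm_lw]
            exact ((qlt_iff _ _).mp hl'').1 i
          · intro i
            rw [nrm_lw, hcnt]
            exact ((qlt_iff _ _).mp (qlt_cnt_tail j l2')).1 i

/-- for homogeneous `x ∈ Â[k]_α` and `y ∈ Â[k+1]_β`, the `q`-commutator
`[x,y]_q = xy - q^{-(α,β)} yx` lies in the span of the products `u v` with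
`u ∈ Â[k+1]_{β'}`, `v ∈ Â[k]_{α'}`, `‖α'‖ < ‖α‖` and `‖β'‖ < ‖β‖`. -/
theorem statement19 (A : GCM I) (k : ℤ) (α β : I →₀ ℤ) (x y : hA A)
    (hx1 : x ∈ hAk A k) (hx2 : x ∈ hAwt A α)
    (hy1 : y ∈ hAk A (k + 1)) (hy2 : y ∈ hAwt A β) :
    x * y - qh ^ (-(ip A α β)) • (y * x) ∈
      Submodule.span 𝕂 {z : hA A | ∃ (α' β' : I →₀ ℤ) (u v : hA A),
        qlt (nrm α') (nrm α) ∧ qlt (nrm β') (nrm β) ∧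
        u ∈ hAk A (k + 1) ∧ u ∈ hAwt A β' ∧ v ∈ hAk A k ∧ v ∈ hAwt A α' ∧
        z = u * v} := by
  have hxM : x ∈ Mspan A k α := mem_Mspan A k α x hx1 hx2
  have hyM : y ∈ Mspan A (k + 1) β := mem_Mspan A (k + 1) β y hy1 hy2
  show x * y - qh ^ (-(ip A α β)) • (y * x) ∈ Tspan A k α β
  clear hx1 hx2 hy1 hy2
  induction hxM using Submodule.span_induction with
  | mem x hxm =>
      obtain ⟨l1, hl1, rfl⟩ := hxm
      induction hyM using Submodule.span_induction with
      | mem y hym =>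
          obtain ⟨l2, hl2, rfl⟩ := hym
          subst hl1 hl2
          exact claimB A k l2 l1
      | zero =>
          rw [mul_zero, zero_mul, smul_zero, sub_zero]
          exact zero_mem _
      | add y₁ y₂ _ _ h₁ h₂ =>
          have : lvlMon A k l1 * (y₁ + y₂) - qh ^ (-(ip A α β)) • ((y₁ + y₂) * lvlMon A k l1)
              = (lvlMon A k l1 * y₁ - qh ^ (-(ip A α β)) • (y₁ * lvlMon A k l1))
                + (lvlMon A k l1 * y₂ - qh ^ (-(ip A α β)) • (y₂ * lvlMon A k l1)) := by
            rw [mul_add, add_mul, smul_add]; abel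
          rw [this]
          exact add_mem h₁ h₂
      | smul c y _ h =>
          have : lvlMon A k l1 * (c • y) - qh ^ (-(ip A α β)) • (c • y * lvlMon A k l1)
              = c • (lvlMon A k l1 * y - qh ^ (-(ip A α β)) • (y * lvlMon A k l1)) := by
            rw [mul_smul_comm, smul_mul_assoc, smul_sub, smul_comm]
          rw [this]
          exact Submodule.smul_mem _ c h
  | zero =>
      rw [zero_mul, mul_zero, smul_zero, sub_zero]
      exact zero_mem _
  | add x₁ x₂ _ _ h₁ h₂ =>
      have : (x₁ + x₂) * y - qh ^ (-(ip A α β)) • (y * (x₁ + x₂))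
          = (x₁ * y - qh ^ (-(ip A α β)) • (y * x₁))
            + (x₂ * y - qh ^ (-(ip A α β)) • (y * x₂)) := by
        rw [add_mul, mul_add, smul_add]; abel
      rw [this]
      exact add_mem h₁ h₂
  | smul c x _ h =>
      have : (c • x) * y - qh ^ (-(ip A α β)) • (y * (c • x))
          = c • (x * y - qh ^ (-(ip A α β)) • (y * x)) := by
        rw [smul_mul_assoc, mul_smul_comm, smul_sub, smul_comm]
      rw [this]
      exact Submodule.smul_mem _ c h

end
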